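/- arXiv:2210.04148 — 2 statements merged into one kernel-verified Lean document; each statement's English description precedes it below -/
import Mathlib

section
/- There exists C > 0 such that for all z, w in the open unit ball of ℂⁿ with z ≠ 0, |Q_z(w)| ≤ C |φ_z(w)| · |1-⟨z,w⟩|^{1/2}. -/
open MeasureTheory

variable {n : ℕ}

/-- The Hermitian inner product `⟨z,w⟩ = Σᵢ zᵢ ·conj wᵢ` (linear in the first slot). -/
noncomputable def hin (z w : EuclideanSpace ℂ (Fin n)) : ℂ :=
  ∑ i, z i * (starRingEnd ℂ) (w i)

/-- Orthogonal projection of `w` onto the complex line `ℂz`. -/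
noncomputable def Pz (z w : EuclideanSpace ℂ (Fin n)) : EuclideanSpace ℂ (Fin n) :=
  (hin w z / hin z z) • z

/-- Orthogonal projection of `w` onto the orthogonal complement of `ℂz`. -/
noncomputable def Qz (z w : EuclideanSpace ℂ (Fin n)) : EuclideanSpace ℂ (Fin n) :=
  w - Pz z w

open Classical in
/-- The Möbius transform `φ_z` of the unit ball of `ℂⁿ`. -/
noncomputable def mobius (z w : EuclideanSpace ℂ (Fin n)) : EuclideanSpace ℂ (Fin n) :=
  if z = 0 then -w
  else (1 - hin w z)⁻¹ • (z - Pz z w - (Real.sqrt (1 - ‖z‖ ^ 2) : ℂ) • Qz z w)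

local notation "⟪" x ", " y "⟫" => @inner ℂ _ _ x y

lemma hin_eq_inner (z w : EuclideanSpace ℂ (Fin n)) : hin z w = ⟪w, z⟫ := by
  simp [hin, PiLp.inner_apply, mul_comm, RCLike.inner_apply]

lemma hin_self (z : EuclideanSpace ℂ (Fin n)) : hin z z = ((‖z‖ ^ 2 : ℝ) : ℂ) := by
  rw [hin_eq_inner, inner_self_eq_norm_sq_to_K]; norm_cast

lemma inner_z_Qz (z w : EuclideanSpace ℂ (Fin n)) (hz : z ≠ 0) : ⟪z, Qz z w⟫ = 0 := by
  have hzz : hin z z ≠ 0 := by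
    rw [hin_self]
    exact_mod_cast pow_ne_zero 2 (norm_ne_zero_iff.2 hz)
  simp only [Qz, Pz, inner_sub_right, inner_smul_right]
  rw [hin_eq_inner, ← hin_eq_inner z z]
  field_simp
  simp

lemma real_aux (x y u : ℝ) (hx : 0 ≤ x) (hy : 0 ≤ y) (hu : 0 ≤ u)
    (h : u ^ 2 = x ^ 2 + y ^ 2) : x ≤ u ∧ y ≤ u := by
  constructor <;> nlinarith

lemma norm_le_of_inner_zero (a b : EuclideanSpace ℂ (Fin n)) (h : ⟪a, b⟫ = 0) :
    ‖a‖ ≤ ‖a + b‖ ∧ ‖b‖ ≤ ‖a + b‖ := by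
  have h2 : ‖a + b‖ ^ 2 = ‖a‖ ^ 2 + ‖b‖ ^ 2 := by
    rw [norm_add_sq (𝕜 := ℂ), h]; simp
  exact real_aux ‖a‖ ‖b‖ ‖a + b‖ (norm_nonneg a) (norm_nonneg b) (norm_nonneg (a + b)) h2

lemma hsD_aux (s ω nw nz re D : ℝ) (h3 : s ≤ ω) (hs : 0 ≤ s)
    (hns : ω ^ 2 = nw ^ 2 - 2 * re + nz ^ 2) (hre : 1 - re ≤ D)
    (hw : nw < 1) (hz : nz < 1) (hnw : 0 ≤ nw) (hnz : 0 ≤ nz) : s ^ 2 ≤ 2 * D := by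
  nlinarith

lemma endgame (s t ε D m : ℝ) (hε0 : 0 < ε) (hD0 : 0 < D) (hs0 : 0 ≤ s) (ht0 : 0 ≤ t)
    (hm0 : 0 ≤ m) (h1 : t ≤ m * D) (h2 : Real.sqrt ε * s ≤ m * D)
    (hsD : s ^ 2 ≤ 2 * D) (hDεt : D ≤ ε + t) :
    s ≤ 3 * m * Real.sqrt D := by
  set r := Real.sqrt D with hr
  set e := Real.sqrt ε with he
  have hr0 : 0 < r := Real.sqrt_pos.2 hD0
  have he0 : 0 < e := Real.sqrt_pos.2 hε0
  have hDr : r * r = D := Real.mul_self_sqrt hD0.le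
  have hεe : e * e = ε := Real.mul_self_sqrt hε0.le
  rcases le_or_gt D (2 * ε) with hcase | hcase
  · have hre : r ≤ 2 * e := by nlinarith
    have hstep : e * s ≤ m * (r * r) := by rw [hDr]; exact h2
    have hstep2 : m * (r * r) ≤ m * r * (2 * e) := by nlinarith [mul_nonneg hm0 hr0.le]
    have h4 : e * s ≤ e * (2 * (m * r)) := by nlinarith
    have hfin : s ≤ 2 * (m * r) := le_of_mul_le_mul_left h4 he0
    nlinarith [mul_nonneg hm0 hr0.le]
  · have hmhalf : 1 / 2 ≤ m := by nlinarith
    have hstep : s ≤ (3 / 2) * r := by nlinarith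
    have hstep2 : (3 / 2) * r ≤ 3 * m * r := by nlinarith [hr0.le]
    linarith

theorem stmt_7 (n : ℕ) :
    ∃ C : ℝ, 0 < C ∧ ∀ z w : EuclideanSpace ℂ (Fin n), ‖z‖ < 1 → ‖w‖ < 1 → z ≠ 0 →
      ‖Qz z w‖ ≤ C * ‖mobius z w‖ * Real.sqrt (‖1 - hin z w‖) := by
  refine ⟨3, by norm_num, ?_⟩
  intro z w hz hw hz0
  set Q := Qz z w with hQ
  set A : EuclideanSpace ℂ (Fin n) := z - Pz z w with hA
  set s := ‖Q‖ with hs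
  set t := ‖A‖ with ht
  set ε := 1 - ‖z‖ ^ 2 with hε
  have hε0 : 0 < ε := by nlinarith [norm_nonneg z]
  set c : ℂ := 1 - hin w z with hc
  have hcw : ‖hin w z‖ < 1 := by
    rw [hin_eq_inner]
    calc ‖⟪z, w⟫‖ ≤ ‖z‖ * ‖w‖ := norm_inner_le_norm z w
    _ < 1 := by nlinarith [norm_nonneg z, norm_nonneg w]
  set D := ‖1 - hin z w‖ with hD
  have hconj : (1 : ℂ) - hin z w = (starRingEnd ℂ) c := by
    rw [hc, hin_eq_inner, hin_eq_inner, map_sub, map_one, inner_conj_symm]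
  have hDc : D = ‖c‖ := by
    rw [hD, hconj]
    exact Complex.norm_conj c
  have hD0 : 0 < D := by
    rw [hDc, hc]
    have h := norm_sub_norm_le (1 : ℂ) (hin w z)
    rw [norm_one] at h
    linarith
  have hc0 : c ≠ 0 := by
    intro h
    rw [hDc, h, norm_zero] at hD0
    exact lt_irrefl 0 hD0
  -- orthogonality of A and Q
  have hzQ : ⟪z, Q⟫ = 0 := inner_z_Qz z w hz0
  have hAQ : ⟪A, Q⟫ = 0 := by
    rw [hA, inner_sub_left, hzQ, Pz, inner_smul_left, hzQ, mul_zero, sub_zero]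
  -- mobius norm
  have hmob : mobius z w = c⁻¹ • (A + (-((Real.sqrt ε : ℂ) • Q))) := by
    rw [mobius, if_neg hz0]
    congr 1
  have hcne : ‖c‖ ≠ 0 := by rw [← hDc]; exact ne_of_gt hD0
  have hmobn : ‖mobius z w‖ * D = ‖A + (-((Real.sqrt ε : ℂ) • Q))‖ := by
    rw [hmob, norm_smul, norm_inv, hDc, mul_comm ‖c‖⁻¹ _, mul_assoc,
      inv_mul_cancel₀ hcne, mul_one]
  have hAQ' : ⟪A, -((Real.sqrt ε : ℂ) • Q)⟫ = 0 := by
    rw [inner_neg_right, inner_smul_right, hAQ, mul_zero, neg_zero]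
  obtain ⟨h1, h2⟩ := norm_le_of_inner_zero A (-((Real.sqrt ε : ℂ) • Q)) hAQ'
  rw [← hmobn] at h1 h2
  have h2' : Real.sqrt ε * s ≤ ‖mobius z w‖ * D := by
    calc Real.sqrt ε * s = ‖-((Real.sqrt ε : ℂ) • Q)‖ := by
          rw [norm_neg, norm_smul, Complex.norm_real, Real.norm_eq_abs,
            abs_of_nonneg (Real.sqrt_nonneg _)]
    _ ≤ _ := h2
  -- s² ≤ 2D
  have hsD : s ^ 2 ≤ 2 * D := by
    have hwz : w - z = Q + (-A) := by
      rw [hQ, hA, Qz]; abel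
    have hQA : ⟪Q, -A⟫ = 0 := by
      rw [inner_neg_right, ← inner_conj_symm, hAQ, map_zero, neg_zero]
    have h3 : s ≤ ‖w - z‖ := by
      rw [hwz]; exact (norm_le_of_inner_zero Q (-A) hQA).1
    have hre : 1 - (⟪w, z⟫ : ℂ).re ≤ D := by
      rw [hD, hin_eq_inner]
      have h := Complex.re_le_norm (1 - ⟪w, z⟫)
      rw [Complex.sub_re, Complex.one_re] at h
      exact h
    have hns := @norm_sub_sq ℂ _ _ _ _ w z
    simp only [RCLike.re_to_complex] at hns
    exact hsD_aux s ‖w - z‖ ‖w‖ ‖z‖ (⟪w, z⟫ : ℂ).re D h3 (norm_nonneg Q) hns hre hw hz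
      (norm_nonneg w) (norm_nonneg z)
  -- D ≤ ε + t
  have hDεt : D ≤ ε + t := by
    have hzPzw : ⟪z, w⟫ = ⟪z, Pz z w⟫ := by
      have h0 := hzQ
      rw [hQ, Qz, inner_sub_right, sub_eq_zero] at h0
      exact h0
    have hzA2 : ⟪z, A⟫ = ⟪z, z⟫ - ⟪z, w⟫ := by
      rw [hA, inner_sub_right, hzPzw]
    have hsplit : c = ((1 : ℂ) - ⟪z, z⟫) + ⟪z, A⟫ := by
      rw [hc, hin_eq_inner, hzA2]; ring
    have h1' : ‖(1 : ℂ) - ⟪z, z⟫‖ = ε := by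
      rw [← hin_eq_inner, hin_self]
      have heq : (1 : ℂ) - ((‖z‖ ^ 2 : ℝ) : ℂ) = ((1 - ‖z‖ ^ 2 : ℝ) : ℂ) := by
        push_cast; ring
      rw [heq, Complex.norm_real, Real.norm_eq_abs, ← hε, abs_of_pos hε0]
    have h2'' : ‖⟪z, A⟫‖ ≤ t := by
      calc ‖⟪z, A⟫‖ ≤ ‖z‖ * ‖A‖ := norm_inner_le_norm z A
      _ ≤ 1 * t := mul_le_mul hz.le le_rfl (norm_nonneg A) zero_le_one
      _ = t := one_mul t
    calc D = ‖c‖ := hDc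
    _ ≤ ‖(1 : ℂ) - ⟪z, z⟫‖ + ‖⟪z, A⟫‖ := by rw [hsplit]; exact norm_add_le _ _
    _ ≤ ε + t := by rw [h1']; linarith
  exact endgame s t ε D ‖mobius z w‖ hε0 hD0 (norm_nonneg Q) (norm_nonneg A)
    (norm_nonneg _) h1 h2' hsD hDεt
end

section
/- There exists C > 0 such that for all z, w in the open unit ball of ℂⁿ, |z - w| ≤ C |φ_z(w)| · |1-⟨z,w⟩|^{1/2}. -/
open MeasureTheory

variable {n : ℕ}

open scoped InnerProductSpace

lemma hin_eq {n : ℕ} (z w : EuclideanSpace ℂ (Fin n)) : hin z w = ⟪w, z⟫_ℂ := by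
  simp [hin, PiLp.inner_apply, RCLike.inner_apply, mul_comm]

lemma lemB (r2 w2 : ℝ) (a : ℂ) (h1 : 0 < r2) (h2 : r2 ≤ 1) (h3 : 0 ≤ w2) (h4 : w2 ≤ 1)
    (hcs : ‖a‖ ^ 2 ≤ r2 * w2) :
    (r2 + w2 - 2*a.re) * ‖1-a‖ ≤ 3 * (‖1-a‖^2 - (1-r2)*(1-w2)) := by
  set u : ℝ := 1 - a.re with hu
  set v : ℝ := |a.im| with hv
  have hv0 : 0 ≤ v := abs_nonneg _
  have hv2 : v^2 = a.im^2 := sq_abs _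
  have ha2 : a.re^2 + a.im^2 ≤ r2 * w2 := by
    have := Complex.sq_norm a
    rw [Complex.normSq_apply] at this
    nlinarith [hcs]
  have h1a2 : ‖1-a‖^2 = u^2 + v^2 := by
    rw [Complex.sq_norm, Complex.normSq_apply]
    simp only [Complex.sub_re, Complex.sub_im, Complex.one_re, Complex.one_im, hv2, ← hu]
    ring
  have hS0 : 2*u ≥ (1-r2) + (1-w2) := by
    nlinarith [sq_nonneg (r2 - w2), sq_nonneg a.im, sq_nonneg (1 - u - (r2+w2)/2), sq_nonneg (1 - u + (r2+w2)/2)]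
  have hu0 : 0 ≤ u := by nlinarith
  have habs : ‖1-a‖ ≤ u + v := by
    have h := Complex.norm_le_abs_re_add_abs_im (1-a)
    have : |(1-a).re| = u := by
      simp [Complex.sub_re, abs_of_nonneg hu0, hu]
      linarith
    have h2 : |(1-a).im| = v := by simp [Complex.sub_im, hv]
    rw [this, h2] at h
    exact h
  have hS : 0 ≤ r2 + w2 - 2*a.re := by nlinarith
  have hxy : 0 ≤ (1-r2) + (1-w2) := by nlinarith
  calc (r2 + w2 - 2*a.re) * ‖1-a‖
      ≤ (r2 + w2 - 2*a.re) * (u + v) := mul_le_mul_of_nonneg_left habs hS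
    _ ≤ 3 * (‖1-a‖^2 - (1-r2)*(1-w2)) := by
        rw [h1a2]
        nlinarith [sq_nonneg (2*u - (1-r2) - (1-w2) - 2*v), sq_nonneg ((1-r2)-(1-w2)),
          mul_nonneg (by nlinarith : (0:ℝ) ≤ 2*u - (1-r2) - (1-w2)) hxy, sq_nonneg v]

-- the key norm identity
lemma lemA {n : ℕ} (z w : EuclideanSpace ℂ (Fin n)) (hz : z ≠ 0) (hz1 : ‖z‖ < 1) :
    ‖z - Pz z w - (Real.sqrt (1 - ‖z‖ ^ 2) : ℂ) • Qz z w‖ ^ 2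
      = ‖1 - ⟪z, w⟫_ℂ‖ ^ 2 - (1 - ‖z‖ ^ 2) * (1 - ‖w‖^2) := by
  set a : ℂ := ⟪z, w⟫_ℂ with ha
  set r2 : ℝ := ‖z‖^2 with hr2def
  have hzn : (0:ℝ) < ‖z‖ := norm_pos_iff.mpr hz
  have hr2 : (0:ℝ) < r2 := by rw [hr2def]; positivity
  have hr2c : (↑(r2) : ℂ) ≠ 0 := by exact_mod_cast hr2.ne'
  have hzz : hin z z = (↑(r2) : ℂ) := by
    rw [hin_eq, inner_self_eq_norm_sq_to_K]; norm_cast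
  have hwz : hin w z = a := by rw [hin_eq, ha]
  have hPz : Pz z w = (a / (↑(r2):ℂ)) • z := by rw [Pz, hzz, hwz]
  have hself : ⟪z, z⟫_ℂ = (↑(r2):ℂ) := by
    rw [inner_self_eq_norm_sq_to_K]; norm_cast
  have hzQ : ⟪z, Qz z w⟫_ℂ = 0 := by
    rw [Qz, inner_sub_right, hPz, inner_smul_right, hself, div_mul_cancel₀ _ hr2c, ← ha, sub_self]
  have hPn : ‖Pz z w‖^2 = ‖a‖ ^2 / r2 := by
    rw [hPz, norm_smul, norm_div, Complex.norm_real, Real.norm_eq_abs, abs_of_pos hr2]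
    field_simp
    ring
  have hPQ : ⟪Pz z w, Qz z w⟫_ℂ = 0 := by
    rw [hPz, inner_smul_left, hzQ, mul_zero]
  have hQn : ‖Qz z w‖^2 = ‖w‖^2 - ‖a‖ ^2 / r2 := by
    have hw : Pz z w + Qz z w = w := by rw [Qz]; abel
    have := norm_add_sq_eq_norm_sq_add_norm_sq_of_inner_eq_zero (Pz z w) (Qz z w) hPQ
    rw [hw] at this
    nlinarith [hPn]
  have hs0 : (0:ℝ) ≤ 1 - r2 := by rw [hr2def]; nlinarith [norm_nonneg z]
  have hs2 : Real.sqrt (1 - r2) ^ 2 = 1 - r2 := Real.sq_sqrt hs0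
  have hzP : z - Pz z w = (1 - a / (↑(r2):ℂ)) • z := by
    rw [hPz, sub_smul, one_smul]
  have hxn : ‖z - Pz z w‖^2 = ‖1 - a / (↑(r2):ℂ)‖^2 * r2 := by
    rw [hzP, norm_smul]; ring
  have horth : ⟪z - Pz z w, (Real.sqrt (1 - r2) : ℂ) • Qz z w⟫_ℂ = 0 := by
    rw [hzP, inner_smul_left, inner_smul_right, hzQ, mul_zero, mul_zero]
  have hsn : ‖(Real.sqrt (1 - r2) : ℂ) • Qz z w‖^2 = (1 - r2) * ‖Qz z w‖^2 := by
    rw [norm_smul, Complex.norm_real, Real.norm_eq_abs,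
      abs_of_nonneg (Real.sqrt_nonneg _), mul_pow, hs2]
  have hmain := norm_sub_sq (𝕜 := ℂ) (z - Pz z w) ((Real.sqrt (1 - r2) : ℂ) • Qz z w)
  rw [horth, map_zero, mul_zero, sub_zero, hxn, hsn, hQn] at hmain
  rw [hmain]
  -- now pure scalar algebra
  have habs1 : ‖1 - a / (↑(r2):ℂ)‖^2
      = ((r2 - a.re)^2 + a.im^2) / (r2)^2 := by
    have : (1 : ℂ) - a / (↑(r2):ℂ) = ((↑(r2):ℂ) - a) / (↑(r2):ℂ) := by
      rw [eq_div_iff hr2c, sub_mul, one_mul, div_mul_cancel₀ _ hr2c]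
    rw [this, norm_div, Complex.norm_real, Real.norm_eq_abs, abs_of_pos hr2, div_pow, Complex.sq_norm,
      Complex.normSq_apply]
    simp [Complex.sub_re, Complex.sub_im]
    ring
  have habs2 : ‖1 - a‖^2 = (1 - a.re)^2 + a.im^2 := by
    rw [Complex.sq_norm, Complex.normSq_apply]
    simp [Complex.sub_re, Complex.sub_im]
    ring
  have habs3 : ‖a‖^2 = a.re^2 + a.im^2 := by
    rw [Complex.sq_norm, Complex.normSq_apply]; ring
  rw [habs1, habs2, habs3]
  field_simp
  ring

theorem stmt_8 (n : ℕ) :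
    ∃ C : ℝ, 0 < C ∧ ∀ z w : EuclideanSpace ℂ (Fin n), ‖z‖ < 1 → ‖w‖ < 1 →
      ‖z - w‖ ≤ C * ‖mobius z w‖ * Real.sqrt ‖1 - hin z w‖ := by
  refine ⟨2, by norm_num, fun z w hz1 hw1 => ?_⟩
  by_cases hz : z = 0
  · subst hz
    have h0 : hin (0 : EuclideanSpace ℂ (Fin n)) w = 0 := by simp [hin]
    have hm : mobius (0 : EuclideanSpace ℂ (Fin n)) w = -w := by simp [mobius]
    simp only [h0, hm, zero_sub, norm_neg, sub_zero, norm_one, Real.sqrt_one, mul_one]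
    nlinarith [norm_nonneg w]
  · set a : ℂ := ⟪z, w⟫_ℂ with ha
    set c : ℝ := ‖1 - a‖ with hcdef
    have hcs : ‖a‖ ≤ ‖z‖ * ‖w‖ := by
      exact norm_inner_le_norm z w
    have ha1 : ‖a‖ < 1 := by
      nlinarith [norm_nonneg z, norm_nonneg w, norm_nonneg a]
    have h1ane : (1:ℂ) - a ≠ 0 := by
      intro h
      have : a = 1 := by linear_combination -h
      rw [this] at ha1; simp at ha1
    have hc : 0 < c := by rw [hcdef]; exact norm_pos_iff.mpr h1ane
    have hzw : ‖1 - hin z w‖ = c := by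
      have hconj : (1:ℂ) - ⟪w,z⟫_ℂ = (starRingEnd ℂ) (1 - a) := by
        rw [map_sub, map_one, ha, inner_conj_symm]
      rw [hin_eq, hconj, Complex.norm_conj]
    rw [hzw]
    have hwz : hin w z = a := by rw [hin_eq, ha]
    have hmob : mobius z w = (1 - a)⁻¹ • (z - Pz z w - (Real.sqrt (1 - ‖z‖ ^ 2) : ℂ) • Qz z w) := by
      rw [mobius, if_neg hz, hwz]
    set M : ℝ := ‖mobius z w‖ with hM
    have hM0 : 0 ≤ M := norm_nonneg _
    have hmn : M * c = ‖z - Pz z w - (Real.sqrt (1 - ‖z‖ ^ 2) : ℂ) • Qz z w‖ := by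
      rw [hM, hmob, norm_smul, norm_inv, ← hcdef]
      field_simp
    have hkey : (M * c)^2 = c^2 - (1 - ‖z‖^2) * (1 - ‖w‖^2) := by
      rw [hmn, lemA z w hz hz1, ← ha, ← hcdef]
    have hsub : ‖z - w‖^2 = ‖z‖^2 + ‖w‖^2 - 2*a.re := by
      have h := norm_sub_sq (𝕜 := ℂ) z w
      rw [← ha, RCLike.re_to_complex] at h
      rw [h]; ring
    have hB := lemB (‖z‖^2) (‖w‖^2) a (pow_pos (norm_pos_iff.mpr hz) 2) (by nlinarith [norm_nonneg z])
      (by positivity) (by nlinarith [norm_nonneg w])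
      (by nlinarith [norm_nonneg a, norm_nonneg z, norm_nonneg w])
    rw [← hcdef] at hB
    have h3 : ‖z - w‖^2 * c ≤ 3 * (M*c)^2 := by rw [hkey, hsub]; linarith
    have h4 : ‖z - w‖^2 ≤ 3 * M^2 * c := by
      have h5 : ‖z - w‖^2 * c ≤ (3 * M^2 * c) * c := by nlinarith
      exact le_of_mul_le_mul_right h5 hc
    have h6 : ‖z - w‖^2 ≤ (2 * M * Real.sqrt c)^2 := by
      have : (2 * M * Real.sqrt c)^2 = 4 * M^2 * c := by
        rw [mul_pow, mul_pow, Real.sq_sqrt hc.le]; ring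
      rw [this]; nlinarith [sq_nonneg M]
    calc ‖z - w‖ = Real.sqrt (‖z - w‖^2) := (Real.sqrt_sq (norm_nonneg _)).symm
      _ ≤ Real.sqrt ((2 * M * Real.sqrt c)^2) := Real.sqrt_le_sqrt h6
      _ = 2 * M * Real.sqrt c := Real.sqrt_sq (by positivity)
end
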